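/- arXiv:1410.1101 — 2 statements merged into one kernel-verified Lean document; each statement's English description precedes it below -/
import Mathlib

section
/- Optimality of the backward kernel in SMC samplers: with importance path density q̃_t(x_{1:t}) = q₁(x₁)∏ⱼ Kⱼ(x_{j−1},xⱼ), marginal q_t(x_t) = ∫ q̃_t dx_{1:t−1}, and backward kernels L_s^{opt}(x_{s+1},x_s) = q_s(x_s)K_{s+1}(x_s,x_{s+1})/q_{s+1}(x_{s+1}), the resulting path importance weight w_t^{opt}(x_{1:t}) = f_t(x_t)∏_s L_s^{opt}(x_{s+1},x_s) / q̃_t(x_{1:t}) equals f_t(x_t)/q_t(x_t), and its variance under q̃_t is no larger than that of the weight obtained with any other choice of backward kernels. -/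
open MeasureTheory
open scoped ENNReal

section SMCAux

variable {E : Type*} [MeasurableSpace E] {ν : Measure E} [SigmaFinite ν]

lemma smc_measurable_snoc {n : ℕ} (y : E) :
    Measurable (fun z : Fin n → E => (Fin.snoc z y : Fin (n + 1) → E)) := by
  refine measurable_pi_iff.2 fun i => ?_
  refine Fin.lastCases ?_ (fun j => ?_) i
  · simpa [Fin.snoc_last] using measurable_const
  · simpa [Fin.snoc_castSucc] using measurable_pi_apply j

lemma smc_measurable_snoc' {n : ℕ} :
    Measurable (fun p : E × (Fin n → E) => (Fin.snoc p.2 p.1 : Fin (n + 1) → E)) := by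
  refine measurable_pi_iff.2 fun i => ?_
  refine Fin.lastCases ?_ (fun j => ?_) i
  · simpa [Fin.snoc_last] using measurable_fst
  · simpa [Fin.snoc_castSucc, Function.comp_def] using (measurable_pi_apply j).comp measurable_snd

lemma smc_measurable_cons {n : ℕ} :
    Measurable (fun p : E × (Fin n → E) => (Fin.cons p.1 p.2 : Fin (n + 1) → E)) := by
  refine measurable_pi_iff.2 fun i => ?_
  refine Fin.cases ?_ (fun j => ?_) i
  · simpa [Fin.cons_zero] using measurable_fst
  · simpa [Fin.cons_succ, Function.comp_def] using (measurable_pi_apply j).comp measurable_snd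

/-- Splitting off the last coordinate of a product measure. -/
lemma smc_lintegral_snoc {n : ℕ} (F : (Fin (n + 1) → E) → ℝ≥0∞)
    (hF : Measurable F) :
    ∫⁻ x, F x ∂(Measure.pi fun _ : Fin (n + 1) => ν)
      = ∫⁻ y, ∫⁻ z, F (Fin.snoc z y) ∂(Measure.pi fun _ : Fin n => ν) ∂ν := by
  have h := (measurePreserving_piFinSuccAbove (fun _ : Fin (n + 1) => ν) (Fin.last n)).symm
  rw [← h.lintegral_comp hF]
  have hfun : ∀ p : E × (Fin n → E),
      ((MeasurableEquiv.piFinSuccAbove (fun _ : Fin (n + 1) => E) (Fin.last n)).symm p)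
        = (Fin.snoc p.2 p.1 : Fin (n + 1) → E) := by
    intro p
    simp [MeasurableEquiv.piFinSuccAbove, Fin.insertNth_last', Fin.snocEquiv]
  simp only [hfun]
  rw [lintegral_prod (fun p => F (Fin.snoc p.2 p.1))
    ((hF.comp smc_measurable_snoc' : Measurable fun p : E × (Fin n → E) =>
      F (Fin.snoc p.2 p.1)).aemeasurable)]

/-- The key marginalization identity. -/
lemma smc_marg (P : ℕ → E → E → ℝ≥0∞)
    (hP : ∀ j, Measurable (Function.uncurry (P j)))
    (R : ℕ → E → ℝ≥0∞) (hR : ∀ j, Measurable (R j))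
    (hrec : ∀ j b, ∫⁻ a, R j a * P j a b ∂ν = R (j + 1) b) :
    ∀ (n m : ℕ) (y : E),
      ∫⁻ z : Fin n → E, R m ((Fin.snoc z y : Fin (n + 1) → E) 0)
          * ∏ j : Fin n, P (m + (j : ℕ)) ((Fin.snoc z y : Fin (n + 1) → E) j.castSucc)
            ((Fin.snoc z y : Fin (n + 1) → E) j.succ)
        ∂(Measure.pi fun _ : Fin n => ν) = R (m + n) y := by
  intro n
  induction n with
  | zero =>
    intro m y
    have h0 : ∀ z : Fin 0 → E, (Fin.snoc z y : Fin 1 → E) 0 = y := by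
      intro z; simp [Fin.snoc]
    simp only [h0, Finset.univ_eq_empty, Finset.prod_empty, mul_one, Nat.add_zero]
    rw [lintegral_const]
    simp [Measure.pi_univ]
  | succ n ih =>
    intro m y
    set Φ : (Fin (n + 1) → E) → ℝ≥0∞ := fun z =>
      R m ((Fin.snoc z y : Fin (n + 2) → E) 0)
        * ∏ j : Fin (n + 1), P (m + (j : ℕ)) ((Fin.snoc z y : Fin (n + 2) → E) j.castSucc)
          ((Fin.snoc z y : Fin (n + 2) → E) j.succ)
      with hΦdef
    have hΦ : Measurable Φ := by
      refine ((hR m).comp ((measurable_pi_apply 0).comp (smc_measurable_snoc y))).mul ?_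
      refine Finset.measurable_prod _ fun j _ => ?_
      exact (hP _).comp
        ((((measurable_pi_apply _).comp (smc_measurable_snoc y))).prodMk
          ((measurable_pi_apply _).comp (smc_measurable_snoc y)))
    have h := (measurePreserving_piFinSuccAbove (fun _ : Fin (n + 1) => ν) 0).symm
    rw [← h.lintegral_comp hΦ]
    have hfun : ∀ p : E × (Fin n → E),
        ((MeasurableEquiv.piFinSuccAbove (fun _ : Fin (n + 1) => E) 0).symm p)
          = (Fin.cons p.1 p.2 : Fin (n + 1) → E) := by
      intro p
      simp [MeasurableEquiv.piFinSuccAbove, Fin.insertNth_zero', Fin.consEquiv]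
    simp only [hfun]
    have hkey : ∀ (a : E) (z : Fin n → E),
        Φ (Fin.cons a z) = (R m a * P m a ((Fin.snoc z y : Fin (n + 1) → E) 0)) *
          ∏ i : Fin n, P ((m + 1) + (i : ℕ))
            ((Fin.snoc z y : Fin (n + 1) → E) i.castSucc)
            ((Fin.snoc z y : Fin (n + 1) → E) i.succ) := by
      intro a z
      have hsc : (Fin.snoc (Fin.cons a z) y : Fin (n + 2) → E)
          = Fin.cons a (Fin.snoc z y) := (Fin.cons_snoc_eq_snoc_cons a z y).symm
      simp only [hΦdef, hsc, Fin.cons_zero]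
      rw [Fin.prod_univ_succ]
      have h1 : (Fin.cons a (Fin.snoc z y) : Fin (n + 2) → E)
          ((0 : Fin (n + 1)).succ) = (Fin.snoc z y : Fin (n + 1) → E) 0 := by
        rw [Fin.cons_succ]
      simp only [Fin.castSucc_zero, Fin.cons_zero, Fin.val_zero, Nat.add_zero, h1]
      rw [mul_assoc]
      congr 1
      congr 1
      refine Finset.prod_congr rfl fun i _ => ?_
      rw [show (Fin.succ i).castSucc = (Fin.castSucc i).succ from (Fin.succ_castSucc i).symm,
        Fin.cons_succ, Fin.cons_succ,
        show m + ((i.succ : Fin (n + 1)) : ℕ) = m + 1 + (i : ℕ) by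
          rw [Fin.val_succ]; omega]
    have hmeas2 : Measurable fun p : E × (Fin n → E) => Φ (Fin.cons p.1 p.2) :=
      hΦ.comp smc_measurable_cons
    rw [lintegral_prod _ hmeas2.aemeasurable]
    rw [lintegral_lintegral_swap hmeas2.aemeasurable]
    have hinner : ∀ z : Fin n → E, (∫⁻ a, Φ (Fin.cons a z) ∂ν)
        = R (m + 1) ((Fin.snoc z y : Fin (n + 1) → E) 0) * ∏ i : Fin n, P ((m + 1) + (i : ℕ))
            ((Fin.snoc z y : Fin (n + 1) → E) i.castSucc)
            ((Fin.snoc z y : Fin (n + 1) → E) i.succ) := by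
      intro z
      simp only [hkey]
      have hm : Measurable fun a : E => R m a * P m a ((Fin.snoc z y : Fin (n + 1) → E) 0) :=
        (hR m).mul
          ((hP m).comp (measurable_id.prodMk measurable_const) :
            Measurable fun a : E => P m a ((Fin.snoc z y : Fin (n + 1) → E) 0))
      rw [lintegral_mul_const _ hm, hrec]
    simp only [hinner]
    rw [ih (m + 1) y]
    congr 1
    omega

end SMCAux
/-- Optimality of the backward kernels in SMC samplers: with path importance
density `q̃(x₁:ₜ) = q₁(x₁)∏ⱼ Kⱼ(xⱼ₋₁,xⱼ)`, marginals `qⱼ`, and backward kernels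
`Lˢᵒᵖᵗ_s(x_{s+1},x_s) = q_s(x_s)K_{s+1}(x_s,x_{s+1})/q_{s+1}(x_{s+1})`, the
resulting path weight equals `f_t(x_t)/q_t(x_t)`, and its variance under `q̃`
is no larger than that of the weight obtained from any other (normalized)
choice of backward kernels. -/
theorem smc_backward_kernel_optimality
    {E : Type*} [MeasurableSpace E] (ν : Measure E) [SigmaFinite ν]
    (n : ℕ) (q1 : E → ℝ) (K : ℕ → E → E → ℝ) (f : E → ℝ)
    (hq1m : Measurable q1) (hKm : ∀ j, Measurable (Function.uncurry (K j)))
    (hfm : Measurable f) (hf0 : ∀ x, 0 ≤ f x)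
    (hq1int : ∫ x, q1 x ∂ν = 1) (hKint : ∀ j x, ∫ y, K j x y ∂ν = 1)
    -- the marginal importance densities q_j
    (qm : ℕ → E → ℝ) (hqm0 : qm 0 = q1)
    (hqmrec : ∀ j y, qm (j + 1) y = ∫ x, qm j x * K j x y ∂ν)
    (hqmpos : ∀ j x, 0 < qm j x) (hKpos : ∀ j x y, 0 < K j x y)
    -- the path importance density
    (qpath : (Fin (n + 1) → E) → ℝ)
    (hqpath : qpath = fun x =>
      q1 (x 0) * ∏ j : Fin n, K j (x j.castSucc) (x j.succ))
    -- the optimal backward kernels and the induced path weight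
    (Lopt : ℕ → E → E → ℝ)
    (hLopt : Lopt = fun s y x => qm s x * K s x y / qm (s + 1) y)
    (wopt : (Fin (n + 1) → E) → ℝ)
    (hwopt : wopt = fun x =>
      f (x (Fin.last n)) * (∏ s : Fin n, Lopt s (x s.succ) (x s.castSucc)) /
        qpath x) :
    (∀ x : Fin (n + 1) → E,
        wopt x = f (x (Fin.last n)) / qm n (x (Fin.last n))) ∧
    (∀ L : ℕ → E → E → ℝ, (∀ j, Measurable (Function.uncurry (L j))) →
      (∀ s y x, 0 ≤ L s y x) → (∀ s y, ∫ x, L s y x ∂ν = 1) →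
      ∀ wL : (Fin (n + 1) → E) → ℝ,
        wL = (fun x => f (x (Fin.last n)) *
          (∏ s : Fin n, L s (x s.succ) (x s.castSucc)) / qpath x) →
        Integrable (fun x => (wL x) ^ 2 * qpath x)
          (Measure.pi fun _ : Fin (n + 1) => ν) →
        (∫ x, (wopt x) ^ 2 * qpath x ∂(Measure.pi fun _ : Fin (n + 1) => ν)) -
            (∫ x, wopt x * qpath x ∂(Measure.pi fun _ : Fin (n + 1) => ν)) ^ 2 ≤
          (∫ x, (wL x) ^ 2 * qpath x ∂(Measure.pi fun _ : Fin (n + 1) => ν)) -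
            (∫ x, wL x * qpath x ∂(Measure.pi fun _ : Fin (n + 1) => ν)) ^ 2) := by
  -- measurability of the marginals
  have hqmm : ∀ j, Measurable (qm j) := by
    intro j
    induction j with
    | zero => rw [hqm0]; exact hq1m
    | succ j ih =>
      have he : qm (j + 1) = fun y => ∫ x, qm j x * K j x y ∂ν := funext fun y => hqmrec j y
      rw [he]
      have hsm : StronglyMeasurable (fun p : E × E => qm j p.2 * K j p.2 p.1) :=
        ((ih.comp measurable_snd).mul
          ((hKm j).comp (measurable_snd.prodMk measurable_fst))).stronglyMeasurable
      exact hsm.integral_prod_right'.measurable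
  have hKterm : ∀ j : Fin n,
      Measurable fun x : Fin (n + 1) → E => K (j : ℕ) (x j.castSucc) (x j.succ) := by
    intro j
    have h1 : Measurable fun x : Fin (n + 1) → E => (x j.castSucc, x j.succ) :=
      (measurable_pi_apply (X := fun _ : Fin (n + 1) => E) j.castSucc).prodMk
        (measurable_pi_apply j.succ)
    exact (hKm (j : ℕ)).comp h1
  have hqpathm : Measurable qpath := by
    rw [hqpath]
    exact (hq1m.comp (measurable_pi_apply 0)).mul
      (Finset.measurable_prod _ fun j _ => hKterm j)
  have hq1pos : ∀ x, 0 < q1 x := fun x => hqm0 ▸ hqmpos 0 x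
  have hqpathpos : ∀ x, 0 < qpath x := by
    intro x; rw [hqpath]
    exact mul_pos (hq1pos _) (Finset.prod_pos fun j _ => hKpos _ _ _)
  -- Part 1 : the optimal weight only depends on the last coordinate
  have hpart1 : ∀ x : Fin (n + 1) → E,
      wopt x = f (x (Fin.last n)) / qm n (x (Fin.last n)) := by
    intro x
    have tel : (∏ s : Fin n, qm (s : ℕ) (x s.castSucc)) * qm n (x (Fin.last n))
        = qm 0 (x 0) * ∏ s : Fin n, qm ((s : ℕ) + 1) (x s.succ) := by
      have h1 := Fin.prod_univ_castSucc (f := fun i : Fin (n + 1) => qm (i : ℕ) (x i))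
      have h2 := Fin.prod_univ_succ (f := fun i : Fin (n + 1) => qm (i : ℕ) (x i))
      simp only [Fin.coe_castSucc, Fin.val_succ, Fin.val_last, Fin.val_zero] at h1 h2
      rw [← h1, h2]
    rw [hwopt, hLopt, hqpath]
    simp only
    rw [Finset.prod_div_distrib, Finset.prod_mul_distrib]
    have hA : (∏ s : Fin n, qm (s : ℕ) (x s.castSucc)) ≠ 0 :=
      ne_of_gt (Finset.prod_pos fun s _ => hqmpos _ _)
    have hB : (∏ s : Fin n, K (s : ℕ) (x s.castSucc) (x s.succ)) ≠ 0 :=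
      ne_of_gt (Finset.prod_pos fun s _ => hKpos _ _ _)
    have hC : (∏ s : Fin n, qm ((s : ℕ) + 1) (x s.succ)) ≠ 0 :=
      ne_of_gt (Finset.prod_pos fun s _ => hqmpos _ _)
    have hq1' : q1 (x 0) ≠ 0 := ne_of_gt (hq1pos _)
    have hqn : qm n (x (Fin.last n)) ≠ 0 := ne_of_gt (hqmpos _ _)
    rw [hqm0] at tel
    have key : ∀ (a A B C q0 qn : ℝ), A * qn = q0 * C → B ≠ 0 → C ≠ 0 → q0 ≠ 0 → qn ≠ 0 →
        a * (A * B / C) / (q0 * B) = a / qn := by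
      intro a A B C q0 qn h hB' hC' h0' hn'
      field_simp
      linear_combination a * h
    exact key _ _ _ _ _ _ tel hB hC hq1' hqn
  refine ⟨hpart1, ?_⟩
  intro L hLm hL0 hLint wL hwL hwLint
  set μ := Measure.pi fun _ : Fin (n + 1) => ν with hμ
  set πn := Measure.pi fun _ : Fin n => ν with hπn
  -- integrability from positivity of the integral
  have hInt : ∀ g : E → ℝ, (∀ x, 0 ≤ g x) → (0 < ∫ x, g x ∂ν) → Integrable g ν := by
    intro g h0 hpos
    by_contra hI
    rw [integral_undef hI] at hpos
    exact lt_irrefl 0 hpos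
  -- lintegral versions of the normalizations
  have hqKl : ∀ j b, ∫⁻ a, ENNReal.ofReal (qm j a) * ENNReal.ofReal (K j a b) ∂ν
      = ENNReal.ofReal (qm (j + 1) b) := by
    intro j b
    have hi : Integrable (fun a => qm j a * K j a b) ν := by
      apply hInt _ (fun a => (mul_pos (hqmpos j a) (hKpos j a b)).le)
      rw [← hqmrec j b]; exact hqmpos _ _
    calc ∫⁻ a, ENNReal.ofReal (qm j a) * ENNReal.ofReal (K j a b) ∂ν
        = ∫⁻ a, ENNReal.ofReal (qm j a * K j a b) ∂ν := by
          simp_rw [ENNReal.ofReal_mul (hqmpos j _).le]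
      _ = ENNReal.ofReal (∫ a, qm j a * K j a b ∂ν) :=
          (ofReal_integral_eq_lintegral_ofReal hi (Filter.Eventually.of_forall fun a =>
            (mul_pos (hqmpos j a) (hKpos j a b)).le)).symm
      _ = ENNReal.ofReal (qm (j + 1) b) := by rw [← hqmrec]
  have hLl : ∀ s b, ∫⁻ a, ENNReal.ofReal (L s b a) ∂ν = 1 := by
    intro s b
    have hi : Integrable (fun a => L s b a) ν := by
      apply hInt _ (fun a => hL0 s b a)
      rw [hLint s b]; exact one_pos
    rw [← ofReal_integral_eq_lintegral_ofReal hi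
      (Filter.Eventually.of_forall fun a => hL0 s b a), hLint s b, ENNReal.ofReal_one]
  -- marginalization of the path density
  have M1 : ∀ y, ∫⁻ z : Fin n → E, ENNReal.ofReal (qpath (Fin.snoc z y))
      ∂πn = ENNReal.ofReal (qm n y) := by
    intro y
    have h := smc_marg (ν := ν) (fun j a b => ENNReal.ofReal (K j a b))
      (fun j => (hKm j).ennreal_ofReal)
      (fun j xx => ENNReal.ofReal (qm j xx)) (fun j => (hqmm j).ennreal_ofReal)
      hqKl n 0 y
    simp only [Nat.zero_add, zero_add] at h
    rw [← h]
    refine lintegral_congr fun z => ?_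
    rw [hqpath]
    simp only
    rw [ENNReal.ofReal_mul (hq1pos _).le,
      ENNReal.ofReal_prod_of_nonneg (fun j _ => (hKpos _ _ _).le), hqm0]
  -- the backward kernels integrate to one along the path
  have M2 : ∀ y, ∫⁻ z : Fin n → E, (∏ s : Fin n, ENNReal.ofReal
      (L (s : ℕ) ((Fin.snoc z y : Fin (n + 1) → E) s.succ)
        ((Fin.snoc z y : Fin (n + 1) → E) s.castSucc))) ∂πn = 1 := by
    intro y
    have h := smc_marg (ν := ν) (fun j a b => ENNReal.ofReal (L j b a))
      (fun j => (((hLm j).comp measurable_swap).ennreal_ofReal :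
        Measurable fun p : E × E => ENNReal.ofReal (L j p.2 p.1)))
      (fun _ _ => (1 : ℝ≥0∞)) (fun _ => measurable_const)
      (fun j b => by simp only [one_mul]; exact hLl j b) n 0 y
    simp only [Nat.zero_add, zero_add, one_mul] at h
    exact h
  -- pointwise formulas for the weights
  have hwLqp : ∀ x, wL x * qpath x
      = f (x (Fin.last n)) * ∏ s : Fin n, L (s : ℕ) (x s.succ) (x s.castSucc) := by
    intro x; rw [hwL]; exact div_mul_cancel₀ _ (ne_of_gt (hqpathpos x))
  have hwL0 : ∀ x, 0 ≤ wL x := by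
    intro x
    rw [hwL]
    exact div_nonneg (mul_nonneg (hf0 _)
      (Finset.prod_nonneg fun s _ => hL0 _ _ _)) (hqpathpos x).le
  have hwLm : Measurable wL := by
    rw [hwL]
    have hLterm : ∀ s : Fin n,
        Measurable fun x : Fin (n + 1) → E => L (s : ℕ) (x s.succ) (x s.castSucc) := by
      intro s
      have h1 : Measurable fun x : Fin (n + 1) → E => (x s.succ, x s.castSucc) :=
        (measurable_pi_apply (X := fun _ : Fin (n + 1) => E) s.succ).prodMk
          (measurable_pi_apply s.castSucc)
      exact (hLm (s : ℕ)).comp h1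
    exact ((hfm.comp (measurable_pi_apply _)).mul
      (Finset.measurable_prod _ fun s _ => hLterm s)).div hqpathm
  have hwoptm : Measurable wopt := by
    have he : wopt = fun x => f (x (Fin.last n)) / qm n (x (Fin.last n)) := funext hpart1
    rw [he]
    exact (hfm.comp (measurable_pi_apply _)).div ((hqmm n).comp (measurable_pi_apply _))
  -- per-slice mean of the weight wL
  have hT : ∀ y, ∫⁻ z : Fin n → E,
      ENNReal.ofReal (wL (Fin.snoc z y) * qpath (Fin.snoc z y)) ∂πn
      = ENNReal.ofReal (f y) := by
    intro y
    calc ∫⁻ z : Fin n → E,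
        ENNReal.ofReal (wL (Fin.snoc z y) * qpath (Fin.snoc z y)) ∂πn
        = ∫⁻ z : Fin n → E, ENNReal.ofReal (f y) * ∏ s : Fin n, ENNReal.ofReal
            (L (s : ℕ) ((Fin.snoc z y : Fin (n + 1) → E) s.succ)
              ((Fin.snoc z y : Fin (n + 1) → E) s.castSucc)) ∂πn := by
          refine lintegral_congr fun z => ?_
          rw [hwLqp, Fin.snoc_last,
            ENNReal.ofReal_mul (hf0 y),
            ENNReal.ofReal_prod_of_nonneg (fun s _ => hL0 _ _ _)]
      _ = ENNReal.ofReal (f y) * 1 := by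
          rw [lintegral_const_mul' _ _ ENNReal.ofReal_ne_top, M2 y]
      _ = ENNReal.ofReal (f y) := mul_one _
  -- the common mean
  have hmean : ∀ (w : (Fin (n + 1) → E) → ℝ), Measurable w → (∀ x, 0 ≤ w x * qpath x) →
      (∀ y, ∫⁻ z : Fin n → E,
        ENNReal.ofReal (w (Fin.snoc z y) * qpath (Fin.snoc z y)) ∂πn
        = ENNReal.ofReal (f y)) →
      ∫ x, w x * qpath x ∂μ = (∫⁻ y, ENNReal.ofReal (f y) ∂ν).toReal := by
    intro w hm h0 hy
    rw [integral_eq_lintegral_of_nonneg_ae (Filter.Eventually.of_forall h0)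
      ((hm.mul hqpathm).aestronglyMeasurable)]
    congr 1
    rw [smc_lintegral_snoc (fun x => ENNReal.ofReal (w x * qpath x)) ((hm.mul hqpathm).ennreal_ofReal)]
    exact lintegral_congr fun y => hy y
  have hmeanL : ∫ x, wL x * qpath x ∂μ = (∫⁻ y, ENNReal.ofReal (f y) ∂ν).toReal :=
    hmean wL hwLm (fun x => mul_nonneg (hwL0 x) (hqpathpos x).le) hT
  have hmeanopt : ∫ x, wopt x * qpath x ∂μ = (∫⁻ y, ENNReal.ofReal (f y) ∂ν).toReal := by
    refine hmean wopt hwoptm (fun x => ?_) (fun y => ?_)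
    · rw [hpart1]
      exact mul_nonneg (div_nonneg (hf0 _) (hqmpos _ _).le) (hqpathpos x).le
    · calc ∫⁻ z : Fin n → E,
          ENNReal.ofReal (wopt (Fin.snoc z y) * qpath (Fin.snoc z y)) ∂πn
          = ∫⁻ z : Fin n → E, ENNReal.ofReal (f y / qm n y)
              * ENNReal.ofReal (qpath (Fin.snoc z y)) ∂πn := by
            refine lintegral_congr fun z => ?_
            rw [hpart1, Fin.snoc_last,
              ENNReal.ofReal_mul (div_nonneg (hf0 y) (hqmpos n y).le)]
        _ = ENNReal.ofReal (f y / qm n y) * ENNReal.ofReal (qm n y) := by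
            rw [lintegral_const_mul' _ _ ENNReal.ofReal_ne_top, M1 y]
        _ = ENNReal.ofReal (f y) := by
            rw [← ENNReal.ofReal_mul (div_nonneg (hf0 y) (hqmpos n y).le),
              div_mul_cancel₀ _ (ne_of_gt (hqmpos n y))]
  -- second moments
  set Av := ∫⁻ x, ENNReal.ofReal ((wopt x) ^ 2 * qpath x) ∂μ with hAv
  set Bv := ∫⁻ x, ENNReal.ofReal ((wL x) ^ 2 * qpath x) ∂μ with hBv
  have hsq : ∀ (w : (Fin (n + 1) → E) → ℝ), Measurable w →
      ∫ x, (w x) ^ 2 * qpath x ∂μ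
        = (∫⁻ x, ENNReal.ofReal ((w x) ^ 2 * qpath x) ∂μ).toReal := by
    intro w hm
    rw [integral_eq_lintegral_of_nonneg_ae (Filter.Eventually.of_forall fun x =>
      mul_nonneg (sq_nonneg _) (hqpathpos x).le)
      (((hm.pow_const 2).mul hqpathm).aestronglyMeasurable)]
  have hBfin : Bv ≠ ⊤ := by
    have h2 := hwLint.2
    refine ne_of_lt (lt_of_le_of_lt (lintegral_mono fun x => ?_) h2)
    exact Real.ofReal_le_enorm _
  -- the key inequality between second moments
  have hAB : Av ≤ Bv := by
    rw [hAv, hBv, smc_lintegral_snoc (fun x => ENNReal.ofReal (wopt x ^ 2 * qpath x)) (((hwoptm.pow_const 2).mul hqpathm).ennreal_ofReal),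
      smc_lintegral_snoc (fun x => ENNReal.ofReal (wL x ^ 2 * qpath x)) (((hwLm.pow_const 2).mul hqpathm).ennreal_ofReal)]
    refine lintegral_mono fun y => ?_
    have hL1 : ∫⁻ z : Fin n → E,
        ENNReal.ofReal ((wopt (Fin.snoc z y)) ^ 2 * qpath (Fin.snoc z y)) ∂πn
        = ENNReal.ofReal ((f y / qm n y) ^ 2) * ENNReal.ofReal (qm n y) := by
      calc ∫⁻ z : Fin n → E,
          ENNReal.ofReal ((wopt (Fin.snoc z y)) ^ 2 * qpath (Fin.snoc z y)) ∂πn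
          = ∫⁻ z : Fin n → E, ENNReal.ofReal ((f y / qm n y) ^ 2)
              * ENNReal.ofReal (qpath (Fin.snoc z y)) ∂πn := by
            refine lintegral_congr fun z => ?_
            rw [hpart1, Fin.snoc_last, ENNReal.ofReal_mul (sq_nonneg _)]
        _ = _ := by rw [lintegral_const_mul' _ _ ENNReal.ofReal_ne_top, M1 y]
    rw [hL1]
    set S := ∫⁻ z : Fin n → E,
      ENNReal.ofReal ((wL (Fin.snoc z y)) ^ 2 * qpath (Fin.snoc z y)) ∂πn with hS
    set Q := ENNReal.ofReal (qm n y) with hQ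
    -- Cauchy–Schwarz on the slice
    have hCS : ENNReal.ofReal (f y) ≤ S ^ (1 / 2 : ℝ) * Q ^ (1 / 2 : ℝ) := by
      have h2 : Real.HolderConjugate 2 2 := Real.HolderConjugate.two_two
      have hma : Measurable fun z : Fin n → E =>
          ENNReal.ofReal (wL (Fin.snoc z y) * Real.sqrt (qpath (Fin.snoc z y))) :=
        ((hwLm.comp (smc_measurable_snoc y)).mul
          ((Real.continuous_sqrt.measurable).comp
            (hqpathm.comp (smc_measurable_snoc y)))).ennreal_ofReal
      have hmb : Measurable fun z : Fin n → E =>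
          ENNReal.ofReal (Real.sqrt (qpath (Fin.snoc z y))) :=
        ((Real.continuous_sqrt.measurable).comp
          (hqpathm.comp (smc_measurable_snoc y))).ennreal_ofReal
      have hH := ENNReal.lintegral_mul_le_Lp_mul_Lq πn h2 hma.aemeasurable hmb.aemeasurable
      have hab : ∀ z : Fin n → E,
          ENNReal.ofReal (wL (Fin.snoc z y) * Real.sqrt (qpath (Fin.snoc z y)))
            * ENNReal.ofReal (Real.sqrt (qpath (Fin.snoc z y)))
          = ENNReal.ofReal (wL (Fin.snoc z y) * qpath (Fin.snoc z y)) := by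
        intro z
        rw [← ENNReal.ofReal_mul (mul_nonneg (hwL0 _) (Real.sqrt_nonneg _)),
          mul_assoc, Real.mul_self_sqrt (hqpathpos _).le]
      have ha2 : ∀ z : Fin n → E,
          ENNReal.ofReal (wL (Fin.snoc z y) * Real.sqrt (qpath (Fin.snoc z y))) ^ (2 : ℝ)
          = ENNReal.ofReal ((wL (Fin.snoc z y)) ^ 2 * qpath (Fin.snoc z y)) := by
        intro z
        rw [ENNReal.ofReal_rpow_of_nonneg (mul_nonneg (hwL0 _) (Real.sqrt_nonneg _))
          (by norm_num : (0 : ℝ) ≤ 2)]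
        congr 1
        rw [show (2 : ℝ) = ((2 : ℕ) : ℝ) by norm_num, Real.rpow_natCast, mul_pow,
          Real.sq_sqrt (hqpathpos _).le]
      have hb2 : ∀ z : Fin n → E,
          ENNReal.ofReal (Real.sqrt (qpath (Fin.snoc z y))) ^ (2 : ℝ)
          = ENNReal.ofReal (qpath (Fin.snoc z y)) := by
        intro z
        rw [ENNReal.ofReal_rpow_of_nonneg (Real.sqrt_nonneg _) (by norm_num : (0 : ℝ) ≤ 2)]
        congr 1
        rw [show (2 : ℝ) = ((2 : ℕ) : ℝ) by norm_num, Real.rpow_natCast,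
          Real.sq_sqrt (hqpathpos _).le]
      simp only [Pi.mul_apply] at hH
      calc ENNReal.ofReal (f y) = ∫⁻ z : Fin n → E,
            ENNReal.ofReal (wL (Fin.snoc z y) * Real.sqrt (qpath (Fin.snoc z y)))
              * ENNReal.ofReal (Real.sqrt (qpath (Fin.snoc z y))) ∂πn := by
            rw [← hT y]; exact (lintegral_congr fun z => hab z).symm
        _ ≤ (∫⁻ z : Fin n → E,
              ENNReal.ofReal (wL (Fin.snoc z y) * Real.sqrt (qpath (Fin.snoc z y)))
                ^ (2 : ℝ) ∂πn) ^ (1 / 2 : ℝ)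
            * (∫⁻ z : Fin n → E,
              ENNReal.ofReal (Real.sqrt (qpath (Fin.snoc z y))) ^ (2 : ℝ) ∂πn)
                ^ (1 / 2 : ℝ) := hH
        _ = S ^ (1 / 2 : ℝ) * Q ^ (1 / 2 : ℝ) := by
            rw [lintegral_congr fun z => ha2 z, lintegral_congr fun z => hb2 z, ← hS]
            congr 1
            rw [M1 y]
    have hsqhalf : ∀ X : ℝ≥0∞, X ^ (1 / 2 : ℝ) * X ^ (1 / 2 : ℝ) = X := by
      intro X
      rw [← ENNReal.rpow_add_of_nonneg _ _ (by norm_num) (by norm_num)]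
      norm_num
    have hCS2 : ENNReal.ofReal (f y) * ENNReal.ofReal (f y) ≤ S * Q := by
      calc ENNReal.ofReal (f y) * ENNReal.ofReal (f y)
          ≤ (S ^ (1 / 2 : ℝ) * Q ^ (1 / 2 : ℝ)) * (S ^ (1 / 2 : ℝ) * Q ^ (1 / 2 : ℝ)) :=
            mul_le_mul' hCS hCS
        _ = (S ^ (1 / 2 : ℝ) * S ^ (1 / 2 : ℝ)) * (Q ^ (1 / 2 : ℝ) * Q ^ (1 / 2 : ℝ)) := by
            ring
        _ = S * Q := by rw [hsqhalf, hsqhalf]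
    have he : ENNReal.ofReal ((f y / qm n y) ^ 2) * Q
        = ENNReal.ofReal (f y) * ENNReal.ofReal (f y) / Q := by
      rw [hQ, ← ENNReal.ofReal_mul (sq_nonneg _),
        show (f y / qm n y) ^ 2 * qm n y = (f y * f y) / qm n y by
          field_simp [(hqmpos n y).ne'],
        ENNReal.ofReal_div_of_pos (hqmpos n y), ENNReal.ofReal_mul (hf0 y)]
    rw [he]
    exact ENNReal.div_le_of_le_mul hCS2
  -- conclusion
  rw [hsq wopt hwoptm, hsq wL hwLm, hmeanopt, hmeanL, ← hAv, ← hBv]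
  exact sub_le_sub_right (ENNReal.toReal_mono hBfin hAB) _
end

section
/- Under perfect mixing and reversal backward kernels, the path-IS asymptotic variance factorizes: σ²_{PIS,t} = (∫ π₁²(u₀)/q₀(u₀) du₀) · ∏_{k=2}^t (∫ π_k²(u)/π_{k−1}(u) du) · Var_{π_t}(φ(U)); in particular, for truncated targets π_k = π·1_{G_k}/p_k with nested G_k and q₀ = π, this equals (1/p_t)·Var_{π_t}(φ(U)), which is at least Var_{π_t}(φ(U)). -/
open MeasureTheory

lemma PIS_ratio1 {E : Type*} (π : E → ℝ) (G : Set E) (q : ℝ) (u : E) :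
    (π u * G.indicator 1 u / q) ^ 2 / π u = G.indicator π u / q ^ 2 := by
  by_cases hu : u ∈ G
  · by_cases hπ : π u = 0
    · simp [hπ, Set.indicator_of_mem hu]
    · rw [Set.indicator_of_mem hu, Set.indicator_of_mem hu]
      simp only [Pi.one_apply, mul_one]
      rw [div_pow, div_right_comm, pow_two, mul_div_assoc, div_self hπ, mul_one]
  · simp [Set.indicator_of_notMem hu]

lemma PIS_ratio2 {E : Type*} (π : E → ℝ) (G G' : Set E) (hsub : G' ⊆ G)
    (q q' : ℝ) (hq : q ≠ 0) (u : E) :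
    (π u * G'.indicator 1 u / q') ^ 2 / (π u * G.indicator 1 u / q)
      = G'.indicator π u * (q / q' ^ 2) := by
  by_cases hu : u ∈ G'
  · have hu' : u ∈ G := hsub hu
    by_cases hπ : π u = 0
    · simp [hπ, Set.indicator_of_mem hu]
    · rw [Set.indicator_of_mem hu, Set.indicator_of_mem hu', Set.indicator_of_mem hu]
      simp only [Pi.one_apply, mul_one]
      by_cases hq' : q' = 0
      · simp [hq', div_zero]
      · field_simp
  · simp [Set.indicator_of_notMem hu]

lemma PIS_ratio3 (a c : ℝ) : a ^ 2 * c / a = a * c := by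
  by_cases ha : a = 0
  · simp [ha]
  · field_simp

lemma PIS_tele (p : ℕ → ℝ) (hp : ∀ k, p k ≠ 0) (n : ℕ) :
    ∏ k ∈ Finset.range n, p (k + 1) / p (k + 2) = p 1 / p (n + 1) := by
  induction n with
  | zero => simp [div_self (hp 1)]
  | succ n ih =>
      rw [Finset.prod_range_succ, ih]
      have h1 := hp (n + 1); have h2 := hp (n + 2)
      field_simp

lemma PIS_tele2 (p : ℕ → ℝ) (hp : ∀ k, p k ≠ 0) (n : ℕ) (hn : 1 ≤ n) :
    ∏ j ∈ Finset.range n, (if j = 0 then 1 / p 2 else p (j + 1) / p (j + 2))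
      = 1 / p (n + 1) := by
  induction n, hn using Nat.le_induction with
  | base => simp
  | succ n hn ih =>
      rw [Finset.prod_range_succ, ih, if_neg (by omega)]
      have h1 := hp (n + 1); have h2 := hp (n + 2)
      field_simp

/-- Path-space importance sampling asymptotic variance under perfect mixing and
reversal backward kernels, for the truncated targets `π_k = π·1_{G_k}/p_k`
(nested sets `G_k`, `p_k = ∫_{G_k} π > 0`) and initial proposal `q₀ = π`:
the variance factorizes as
`σ²_{PIS,t} = (∫ π₁²/q₀)·∏_{k=2}^t (∫ π_k²/π_{k−1})·Var_{π_t}(φ)`,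
which equals `(1/p_t)·Var_{π_t}(φ)` and is at least `Var_{π_t}(φ)`. -/
theorem PIS_asymptotic_variance_factorization
    {E : Type*} [MeasurableSpace E] (ν : Measure E) [SigmaFinite ν]
    (π : E → ℝ) (hπm : Measurable π) (hπ0 : ∀ u, 0 ≤ π u)
    (hπ1 : ∫ u, π u ∂ν = 1)
    (G : ℕ → Set E) (hGm : ∀ k, MeasurableSet (G k))
    (hnested : ∀ k, G (k + 1) ⊆ G k)
    (p : ℕ → ℝ) (hp : ∀ k, p k = ∫ u in G k, π u ∂ν)
    (hppos : ∀ k, 0 < p k)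
    (πk : ℕ → E → ℝ)
    (hπk : πk = fun k u => π u * (G k).indicator 1 u / p k)
    (n : ℕ) (φ : E → ℝ) (hφm : Measurable φ)
    (hφ2 : Integrable (fun u => (φ u) ^ 2 * π u) ν)
    -- the path importance density q̃ (perfect mixing: K_t = π_t)
    (qpath : (Fin (n + 1) → E) → ℝ)
    (hqpath : qpath = fun x =>
      π (x 0) * ∏ j : Fin n, πk (j.val + 2) (x j.succ))
    -- the extended target π̃ with reversal backward kernels L_s = π_{s+1}(u_s)
    (πpath : (Fin (n + 1) → E) → ℝ)
    (hπpath : πpath = fun x =>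
      πk (n + 1) (x (Fin.last n)) * ∏ s : Fin n, πk (s.val + 2) (x s.castSucc))
    (m : ℝ) (hm : m = ∫ u, φ u * πk (n + 1) u ∂ν)
    (V : ℝ) (hV : V = ∫ u, (φ u - m) ^ 2 * πk (n + 1) u ∂ν)
    (σ2 : ℝ)
    (hσ2 : σ2 = ∫ x : Fin (n + 1) → E,
      (πpath x) ^ 2 / qpath x * (φ (x (Fin.last n)) - m) ^ 2
        ∂(Measure.pi fun _ : Fin (n + 1) => ν)) :
    σ2 = (∫ u, (πk 1 u) ^ 2 / π u ∂ν) *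
        (∏ k ∈ Finset.range n, ∫ u, (πk (k + 2) u) ^ 2 / πk (k + 1) u ∂ν) * V ∧
    σ2 = (1 / p (n + 1)) * V ∧
    V ≤ σ2 := by
  have hpne : ∀ k, p k ≠ 0 := fun k => (hppos k).ne'
  have hind : ∀ (k : ℕ) (u : E), (G k).indicator π u = π u * (G k).indicator 1 u := by
    intro k u; by_cases hu : u ∈ G k <;> simp [hu]
  have hIa : ∀ k, ∫ u, (G k).indicator π u ∂ν = p k := by
    intro k; rw [MeasureTheory.integral_indicator (hGm k), hp k]
  -- factor integral lemmas
  have hA1 : ∀ j, ∫ u, (πk j u) ^ 2 / π u ∂ν = 1 / p j := by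
    intro j
    have h : (fun u => (πk j u) ^ 2 / π u)
        = fun u => (G j).indicator π u * (1 / (p j) ^ 2) := by
      funext u; rw [hπk]; simp only
      rw [PIS_ratio1 π (G j) (p j) u]; ring
    rw [h, MeasureTheory.integral_mul_const, hIa]
    have := hpne j; field_simp
  have hA2 : ∀ j : ℕ, ∫ u, (πk (j + 2) u) ^ 2 / πk (j + 1) u ∂ν
      = p (j + 1) / p (j + 2) := by
    intro j
    have h : (fun u => (πk (j + 2) u) ^ 2 / πk (j + 1) u)
        = fun u => (G (j + 2)).indicator π u * (p (j + 1) / (p (j + 2)) ^ 2) := by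
      funext u; rw [hπk]; simp only
      exact PIS_ratio2 π (G (j + 1)) (G (j + 2)) (hnested (j + 1)) (p (j + 1))
        (p (j + 2)) (hpne (j + 1)) u
    rw [h, MeasureTheory.integral_mul_const, hIa]
    have := hpne (j + 2); field_simp
  -- the per-coordinate factorization
  set F : Fin (n + 1) → E → ℝ := fun i u =>
    (if (i : ℕ) < n then (πk ((i : ℕ) + 2) u) ^ 2
      else (πk (n + 1) u) ^ 2 * (φ u - m) ^ 2) /
    (if (i : ℕ) = 0 then π u else πk ((i : ℕ) + 1) u) with hF
  have hpoint : ∀ x : Fin (n + 1) → E,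
      (πpath x) ^ 2 / qpath x * (φ (x (Fin.last n)) - m) ^ 2
        = ∏ i, F i (x i) := by
    intro x
    have hNprod : (∏ i : Fin (n + 1),
        (if (i : ℕ) < n then (πk ((i : ℕ) + 2) (x i)) ^ 2
          else (πk (n + 1) (x i)) ^ 2 * (φ (x i) - m) ^ 2))
        = (∏ s : Fin n, πk ((s : ℕ) + 2) (x s.castSucc)) ^ 2
          * ((πk (n + 1) (x (Fin.last n))) ^ 2 * (φ (x (Fin.last n)) - m) ^ 2) := by
      rw [Fin.prod_univ_castSucc, ← Finset.prod_pow]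
      congr 1
      · refine Finset.prod_congr rfl fun s _ => ?_
        rw [if_pos]
        · simp
        · simpa using s.isLt
      · rw [if_neg]
        simp [Fin.val_last]
    have hDprod : (∏ i : Fin (n + 1),
        (if (i : ℕ) = 0 then π (x i) else πk ((i : ℕ) + 1) (x i))) = qpath x := by
      rw [Fin.prod_univ_succ, hqpath]
      simp [Fin.val_succ]
    rw [hF]
    simp only
    rw [Finset.prod_div_distrib, hNprod, hDprod, hπpath]
    simp only
    ring
  -- Fubini
  letI mE : MeasureSpace E := ⟨ν⟩
  letI : SigmaFinite (volume : Measure E) := ‹SigmaFinite ν›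
  have hσprod : σ2 = ∏ i : Fin (n + 1), ∫ u, F i u ∂ν := by
    rw [hσ2]
    have hfun : (fun x : Fin (n + 1) → E =>
        (πpath x) ^ 2 / qpath x * (φ (x (Fin.last n)) - m) ^ 2)
        = fun x => ∏ i, F i (x i) := funext hpoint
    rw [hfun]
    exact MeasureTheory.integral_fin_nat_prod_eq_prod F
  -- evaluate each factor and telescope
  have hσV : σ2 = (1 / p (n + 1)) * V := by
    rcases Nat.eq_zero_or_pos n with hn | hn
    · subst hn
      rw [Fin.prod_univ_one] at hσprod
      rw [hσprod]
      have h : (fun u => F 0 u)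
          = fun u => (1 / p 1) * ((φ u - m) ^ 2 * πk (0 + 1) u) := by
        funext u
        simp only [hF, Fin.val_zero]
        norm_num
        rw [hπk]
        simp only
        rw [mul_div_right_comm, PIS_ratio1, hind]
        ring
      rw [h, MeasureTheory.integral_const_mul, ← hV]
    · have hn0 : n ≠ 0 := hn.ne'
      rw [Fin.prod_univ_castSucc] at hσprod
      have hlast : ∫ u, F (Fin.last n) u ∂ν = V := by
        have h : (fun u => F (Fin.last n) u)
            = fun u => (φ u - m) ^ 2 * πk (n + 1) u := by
          funext u
          simp only [hF, Fin.val_last]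
          rw [if_neg (lt_irrefl n), if_neg hn0, PIS_ratio3]
          ring
        rw [h, ← hV]
      have hmid : ∀ s : Fin n, ∫ u, F s.castSucc u ∂ν
          = (if (s : ℕ) = 0 then 1 / p 2
              else p ((s : ℕ) + 1) / p ((s : ℕ) + 2)) := by
        intro s
        by_cases hs : (s : ℕ) = 0
        · rw [if_pos hs]
          have h : (fun u => F s.castSucc u)
              = fun u => (πk ((s : ℕ) + 2) u) ^ 2 / π u := by
            funext u
            simp only [hF, Fin.coe_castSucc]
            rw [if_pos s.isLt, if_pos hs]
          rw [h, hs]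
          exact hA1 2
        · rw [if_neg hs]
          have h : (fun u => F s.castSucc u)
              = fun u => (πk ((s : ℕ) + 2) u) ^ 2 / πk ((s : ℕ) + 1) u := by
            funext u
            simp only [hF, Fin.coe_castSucc]
            rw [if_pos s.isLt, if_neg hs]
          rw [h]
          exact hA2 (s : ℕ)
      rw [hσprod, hlast,
        Finset.prod_congr rfl (fun s (_ : s ∈ Finset.univ) => hmid s),
        Fin.prod_univ_eq_prod_range
          (fun j => if j = 0 then 1 / p 2 else p (j + 1) / p (j + 2)) n,
        PIS_tele2 p hpne n hn]
  have hRHS1 : (∫ u, (πk 1 u) ^ 2 / π u ∂ν) *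
      (∏ k ∈ Finset.range n, ∫ u, (πk (k + 2) u) ^ 2 / πk (k + 1) u ∂ν) * V
        = (1 / p (n + 1)) * V := by
    rw [hA1 1, Finset.prod_congr rfl (fun k (_ : k ∈ Finset.range n) => hA2 k),
      PIS_tele p hpne n]
    have h1 := hpne 1; have h2 := hpne (n + 1)
    field_simp
  have hV0 : 0 ≤ V := by
    rw [hV]
    refine MeasureTheory.integral_nonneg fun u => ?_
    refine mul_nonneg (sq_nonneg _) ?_
    rw [hπk]
    simp only
    exact div_nonneg (mul_nonneg (hπ0 u)
      (Set.indicator_nonneg (fun _ _ => zero_le_one) u)) (hppos _).le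
  have hπint : Integrable π ν := by
    by_contra h
    rw [MeasureTheory.integral_undef h] at hπ1
    norm_num at hπ1
  have hple : p (n + 1) ≤ 1 := by
    rw [hp, ← hπ1]
    exact MeasureTheory.setIntegral_le_integral hπint
      (Filter.Eventually.of_forall hπ0)
  have h1p : (1 : ℝ) ≤ 1 / p (n + 1) := by
    rw [le_div_iff₀ (hppos (n + 1))]
    linarith
  refine ⟨by rw [hRHS1]; exact hσV, hσV, ?_⟩
  rw [hσV]
  calc V = 1 * V := (one_mul V).symm
  _ ≤ (1 / p (n + 1)) * V := mul_le_mul_of_nonneg_right h1p hV0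
end
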